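/- For generalized Laguerre polynomials, the expansion L_n^β(t) = Σ_{ν=0}^n ((β-α)_{n-ν}/(n-ν)!) L_ν^α(t) holds, where (x)_k denotes the Pochhammer symbol. -/

import Mathlib

open Polynomial

/-- The generalized Laguerre polynomial `L_n^s(t) = Σ_{i=0}^n (-1)^i C(n+s, n-i) t^i / i!`,
where `C(n+s, n-i) = (s+i+1)_{n-i}/(n-i)!`. -/
noncomputable def genLaguerre (s : ℝ) (n : ℕ) : Polynomial ℝ :=
  ∑ i ∈ Finset.range (n + 1),
    C ((-1 : ℝ) ^ i * (ascPochhammer ℝ (n - i)).eval (s + i + 1) /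
        (((n - i).factorial : ℝ) * (i.factorial : ℝ))) * X ^ i

lemma descPoch_real_add (r s : ℝ) (k : ℕ) :
    (descPochhammer ℝ k).eval (r + s) = ∑ ij ∈ Finset.HasAntidiagonal.antidiagonal k,
      (k.choose ij.1 : ℝ) * ((descPochhammer ℝ ij.1).eval r * (descPochhammer ℝ ij.2).eval s) := by
  have conv : ∀ (m : ℕ) (t : ℝ), ((descPochhammer ℤ m).smeval t : ℝ)
      = (descPochhammer ℝ m).eval t := by
    intro m t
    rw [← aeval_eq_smeval, aeval_def, ← eval_map, descPochhammer_map]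
  have key := Ring.descPochhammer_smeval_add (R := ℝ) (r := r) (s := s) k (Commute.all r s)
  simpa [conv] using key

lemma neg_one_pow_sq (j : ℕ) : ((-1 : ℝ)) ^ j * ((-1 : ℝ)) ^ j = 1 := by
  rw [← pow_add, ← two_mul, pow_mul]; norm_num

lemma descPoch_neg (j : ℕ) (t : ℝ) :
    (descPochhammer ℝ j).eval (-t) = (-1) ^ j * (ascPochhammer ℝ j).eval t := by
  have h := ascPochhammer_eval_neg_eq_descPochhammer (R := ℝ) (-t) j
  rw [neg_neg] at h
  rw [h, ← mul_assoc, neg_one_pow_sq, one_mul]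

lemma ascPoch_real_add (x y : ℝ) (m : ℕ) :
    (ascPochhammer ℝ m).eval (x + y) = ∑ k ∈ Finset.range (m + 1),
      (m.choose k : ℝ) * ((ascPochhammer ℝ k).eval x * (ascPochhammer ℝ (m - k)).eval y) := by
  have h1 : (ascPochhammer ℝ m).eval (x + y)
      = (-1) ^ m * (descPochhammer ℝ m).eval (-x + -y) := by
    rw [show (-x + -y : ℝ) = -(x + y) by ring, descPoch_neg, ← mul_assoc, neg_one_pow_sq, one_mul]
  rw [h1, descPoch_real_add, Finset.Nat.sum_antidiagonal_eq_sum_range_succ_mk, Finset.mul_sum]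
  refine Finset.sum_congr rfl fun k hk => ?_
  have hkm : k ≤ m := Nat.lt_succ_iff.mp (Finset.mem_range.mp hk)
  rw [descPoch_neg, descPoch_neg,
    show (-1 : ℝ) ^ m = (-1) ^ k * (-1) ^ (m - k) by rw [← pow_add, Nat.add_sub_cancel' hkm],
    show ((-1 : ℝ) ^ k * (-1) ^ (m - k)) * ((m.choose k : ℝ) *
        ((-1) ^ k * (ascPochhammer ℝ k).eval x * ((-1) ^ (m - k) *
          (ascPochhammer ℝ (m - k)).eval y)))
      = ((-1 : ℝ) ^ k * (-1) ^ k) * (((-1 : ℝ) ^ (m - k) * (-1) ^ (m - k)) *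
        ((m.choose k : ℝ) * ((ascPochhammer ℝ k).eval x * (ascPochhammer ℝ (m - k)).eval y)))
      by ring,
    neg_one_pow_sq, neg_one_pow_sq, one_mul, one_mul]

lemma ascPoch_real_add_div (x y : ℝ) (m : ℕ) :
    (ascPochhammer ℝ m).eval (x + y) / (m.factorial : ℝ) = ∑ k ∈ Finset.range (m + 1),
      ((ascPochhammer ℝ k).eval x / (k.factorial : ℝ)) *
        ((ascPochhammer ℝ (m - k)).eval y / ((m - k).factorial : ℝ)) := by
  rw [ascPoch_real_add, Finset.sum_div]
  refine Finset.sum_congr rfl fun k hk => ?_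
  have hkm : k ≤ m := Nat.lt_succ_iff.mp (Finset.mem_range.mp hk)
  rw [Nat.cast_choose ℝ hkm]
  have h1 : (k.factorial : ℝ) ≠ 0 := Nat.cast_ne_zero.mpr k.factorial_ne_zero
  have h2 : ((m - k).factorial : ℝ) ≠ 0 := Nat.cast_ne_zero.mpr (m - k).factorial_ne_zero
  have h3 : (m.factorial : ℝ) ≠ 0 := Nat.cast_ne_zero.mpr m.factorial_ne_zero
  field_simp

theorem genLaguerre_connection (α β : ℝ) (n : ℕ) :
    genLaguerre β n =
      ∑ ν ∈ Finset.range (n + 1),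
        ((ascPochhammer ℝ (n - ν)).eval (β - α) / ((n - ν).factorial : ℝ)) •
          genLaguerre α ν := by
  unfold genLaguerre
  have hRHS : ∀ ν ∈ Finset.range (n + 1),
      ((ascPochhammer ℝ (n - ν)).eval (β - α) / ((n - ν).factorial : ℝ)) •
        ∑ i ∈ Finset.range (ν + 1),
          C ((-1 : ℝ) ^ i * (ascPochhammer ℝ (ν - i)).eval (α + i + 1) /
              (((ν - i).factorial : ℝ) * (i.factorial : ℝ))) * X ^ i
      = ∑ i ∈ Finset.range (ν + 1),
          C (((ascPochhammer ℝ (n - ν)).eval (β - α) / ((n - ν).factorial : ℝ)) *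
            ((-1 : ℝ) ^ i * (ascPochhammer ℝ (ν - i)).eval (α + i + 1) /
              (((ν - i).factorial : ℝ) * (i.factorial : ℝ)))) * X ^ i := by
    intro ν _
    rw [Finset.smul_sum]
    refine Finset.sum_congr rfl fun i _ => ?_
    rw [smul_eq_C_mul, ← mul_assoc, ← C_mul]
  rw [Finset.sum_congr rfl hRHS]
  have hswap : ∑ ν ∈ Finset.range (n + 1), ∑ i ∈ Finset.range (ν + 1),
        C (((ascPochhammer ℝ (n - ν)).eval (β - α) / ((n - ν).factorial : ℝ)) *
          ((-1 : ℝ) ^ i * (ascPochhammer ℝ (ν - i)).eval (α + i + 1) /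
            (((ν - i).factorial : ℝ) * (i.factorial : ℝ)))) * X ^ i
      = ∑ i ∈ Finset.range (n + 1), ∑ ν ∈ Finset.Ico i (n + 1),
        C (((ascPochhammer ℝ (n - ν)).eval (β - α) / ((n - ν).factorial : ℝ)) *
          ((-1 : ℝ) ^ i * (ascPochhammer ℝ (ν - i)).eval (α + i + 1) /
            (((ν - i).factorial : ℝ) * (i.factorial : ℝ)))) * X ^ i := by
    simpa only [Finset.range_eq_Ico] using (Finset.sum_Ico_Ico_comm 0 (n + 1)
      (fun i ν => C (((ascPochhammer ℝ (n - ν)).eval (β - α) / ((n - ν).factorial : ℝ)) *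
          ((-1 : ℝ) ^ i * (ascPochhammer ℝ (ν - i)).eval (α + i + 1) /
            (((ν - i).factorial : ℝ) * (i.factorial : ℝ)))) * X ^ i)).symm
  rw [hswap]
  refine Finset.sum_congr rfl fun i hi => ?_
  have hin : i ≤ n := Nat.lt_succ_iff.mp (Finset.mem_range.mp hi)
  rw [← Finset.sum_mul, ← map_sum]
  congr 1
  congr 1
  rw [Finset.sum_Ico_eq_sum_range]
  have hni : n + 1 - i = (n - i) + 1 := by omega
  rw [hni]
  have key := ascPoch_real_add_div (α + i + 1) (β - α) (n - i)
  rw [show α + ↑i + 1 + (β - α) = β + i + 1 by ring] at key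
  calc (-1 : ℝ) ^ i * (ascPochhammer ℝ (n - i)).eval (β + i + 1) /
        (((n - i).factorial : ℝ) * (i.factorial : ℝ))
      = ((-1 : ℝ) ^ i / (i.factorial : ℝ)) *
        ((ascPochhammer ℝ (n - i)).eval (β + i + 1) / ((n - i).factorial : ℝ)) := by ring
    _ = ((-1 : ℝ) ^ i / (i.factorial : ℝ)) *
        ∑ k ∈ Finset.range (n - i + 1),
          ((ascPochhammer ℝ k).eval (α + i + 1) / (k.factorial : ℝ)) *
            ((ascPochhammer ℝ (n - i - k)).eval (β - α) / ((n - i - k).factorial : ℝ)) := by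
          rw [key]
    _ = _ := by
          rw [Finset.mul_sum]
          refine Finset.sum_congr rfl fun k hk => ?_
          have e1 : i + k - i = k := by omega
          have e2 : n - (i + k) = n - i - k := by omega
          rw [e1, e2]
          ring
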